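/- If (A, N) is a quadratic normalisation of class (4,3), then for every letter t ∈ A and every N-normal word s₁|⋯|s_q, one has N(t|s₁|⋯|s_q) = N̄_q ⋯ N̄_2 N̄_1(t|s₁|⋯|s_q). In particular, the leftmost letter of N(t|s₁|⋯|s_q) depends only on t and s₁. -/
import Mathlib


/-- Apply `N` to the length-two factor of `w` at positions `i, i+1` (1-indexed). -/
def applyAt {A : Type*} (N : List A → List A) (i : ℕ) (w : List A) : List A :=
  w.take (i - 1) ++ N ((w.drop (i - 1)).take 2) ++ w.drop (i + 1)

/-- Apply `N` to length-two factors at the given sequence of positions,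
leftmost position in the list applied first. -/
def applySeq {A : Type*} (N : List A → List A) (pos : List ℕ) (w : List A) : List A :=
  pos.foldl (fun v i => applyAt N i v) w

/-- The alternating sequence of positions `s, 3-s, s, ...` of length `k` (with `s ∈ {1,2}`). -/
def altSeq : ℕ → ℕ → List ℕ
  | _, 0 => []
  | s, k + 1 => s :: altSeq (3 - s) k

/-- A quadratic normalisation: a length-preserving map, identity on letters,
satisfying `N(u|v|w) = N(u|N(v)|w)`, for which a word is normal iff all its
length-two factors are, and which is computed by finitely many applications
of its restriction to length-two factors. -/
structure QuadraticNormalisation {A : Type*} (N : List A → List A) : Prop where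
  len : ∀ w : List A, (N w).length = w.length
  letter : ∀ a : A, N [a] = [a]
  mid : ∀ u v w : List A, N (u ++ v ++ w) = N (u ++ N v ++ w)
  normal_iff : ∀ w : List A, N w = w ↔
    ∀ (u v : List A) (a b : A), w = u ++ a :: b :: v → N [a, b] = [a, b]
  reach : ∀ w : List A, ∃ pos : List ℕ, N w = applySeq N pos w

/-- The normalisation is of left-class `m`. -/
def LeftClass {A : Type*} (N : List A → List A) (m : ℕ) : Prop :=
  ∀ w : List A, w.length = 3 → N w = applySeq N (altSeq 1 m) w

/-- The normalisation is of right-class `n`. -/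
def RightClass {A : Type*} (N : List A → List A) (n : ℕ) : Prop :=
  ∀ w : List A, w.length = 3 → N w = applySeq N (altSeq 2 n) w

/-- The normalisation is of class `(m, n)`. -/
def IsClass {A : Type*} (N : List A → List A) (m n : ℕ) : Prop :=
  LeftClass N m ∧ RightClass N n

/-- `e` is an `N`-neutral element: `N(w|e) = N(e|w) = N(w)|e` for every word `w`. -/
def Neutral {A : Type*} (N : List A → List A) (e : A) : Prop :=
  ∀ w : List A, N (w ++ [e]) = N w ++ [e] ∧ N (e :: w) = N w ++ [e]

section Aux
variable {A : Type*} {N : List A → List A}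

lemma N_idem (hN : QuadraticNormalisation N) (v : List A) : N (N v) = N v := by
  have := hN.mid [] v []
  simpa using this.symm

lemma exists_pair (hN : QuadraticNormalisation N) (a b : A) :
    ∃ x y, N [a, b] = [x, y] := by
  have h := hN.len [a, b]
  exact List.length_eq_two.mp h

lemma tail_normal (hN : QuadraticNormalisation N) {x : A} {w : List A}
    (h : N (x :: w) = x :: w) : N w = w := by
  rw [hN.normal_iff]
  intro u v a b huv
  exact (hN.normal_iff _).mp h (x :: u) v a b (by rw [huv]; rfl)

lemma applySeq_cons (i : ℕ) (pos : List ℕ) (w : List A) :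
    applySeq N (i :: pos) w = applySeq N pos (applyAt N i w) := rfl

lemma applyAt_one (w : List A) : applyAt N 1 w = N (w.take 2) ++ w.drop 2 := by
  simp [applyAt]

lemma applyAt_cons {i : ℕ} (hi : 1 ≤ i) (a : A) (w : List A) :
    applyAt N (i + 1) (a :: w) = a :: applyAt N i w := by
  obtain ⟨j, rfl⟩ : ∃ j, i = j + 1 := ⟨i - 1, by omega⟩
  have e1 : j + 1 + 1 - 1 = j + 1 := rfl
  have e2 : j + 1 - 1 = j := rfl
  simp only [applyAt, e1, e2, List.take_succ_cons, List.drop_succ_cons, List.cons_append]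

lemma N_applyAt (hN : QuadraticNormalisation N) {i : ℕ} (hi : 1 ≤ i) (w : List A) :
    N (applyAt N i w) = N w := by
  have h1 : (w.drop (i - 1)).drop 2 = w.drop (i + 1) := by
    rw [List.drop_drop]; congr 1; omega
  have h2 : (w.drop (i - 1)).take 2 ++ w.drop (i + 1) = w.drop (i - 1) := by
    rw [← h1, List.take_append_drop]
  calc N (applyAt N i w)
      = N (w.take (i - 1) ++ ((w.drop (i - 1)).take 2) ++ w.drop (i + 1)) :=
        (hN.mid _ _ _).symm
    _ = N w := by rw [List.append_assoc, h2, List.take_append_drop]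

lemma N_applySeq (hN : QuadraticNormalisation N) {pos : List ℕ}
    (hpos : ∀ i ∈ pos, 1 ≤ i) (w : List A) : N (applySeq N pos w) = N w := by
  induction pos generalizing w with
  | nil => rfl
  | cons i pos ih =>
      rw [applySeq_cons, ih (fun j hj => hpos j (by simp [hj])),
        N_applyAt hN (hpos i (by simp))]

lemma applySeq_shift (k : ℕ) : ∀ s : ℕ, 1 ≤ s → ∀ (a : A) (w : List A),
    applySeq N (List.range' (s + 1) k) (a :: w) = a :: applySeq N (List.range' s k) w := by
  induction k with
  | zero => intros; rfl
  | succ k ih =>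
      intro s hs a w
      rw [List.range'_succ, List.range'_succ, applySeq_cons, applySeq_cons,
        applyAt_cons hs]
      exact ih (s + 1) (by omega) a _

end Aux

section Main
variable {A : Type*} {N : List A → List A}

lemma domino (hN : QuadraticNormalisation N) (h3 : RightClass N 3)
    {a b c a' b' c' b'' : A} (hbc : N [b, c] = [b, c]) (hab : N [a, b] = [a', b'])
    (hb'c : N [b', c] = [c', b'']) : N [a', c'] = [a', c'] := by
  have h := h3 [a, b, c] rfl
  have e : applySeq N (altSeq 2 3) [a, b, c] = [a', c', b''] := by
    show applyAt N 2 (applyAt N 1 (applyAt N 2 [a, b, c])) = _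
    have s1 : applyAt N 2 [a, b, c] = [a, b, c] := by simp [applyAt, hbc]
    have s2 : applyAt N 1 [a, b, c] = [a', b', c] := by simp [applyAt, hab]
    have s3 : applyAt N 2 [a', b', c] = [a', c', b''] := by simp [applyAt, hb'c]
    rw [s1, s2, s3]
  rw [e] at h
  have hn : N [a', c', b''] = [a', c', b''] := by
    conv_lhs => rw [← h]
    rw [N_idem hN, h]
  exact (hN.normal_iff _).mp hn [] [b''] a' c' rfl

lemma sweep_eq (hN : QuadraticNormalisation N) (h3 : RightClass N 3) :
    ∀ s : List A, N s = s → ∀ t : A,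
      N (t :: s) = applySeq N (List.range' 1 s.length) (t :: s) := by
  intro s
  induction s with
  | nil => intro _ t; simpa [applySeq] using hN.letter t
  | cons s₁ rest ih =>
    intro hs t
    obtain ⟨a', b', hab⟩ := exists_pair hN t s₁
    have hrest : N rest = rest := tail_normal hN hs
    have hM := ih hrest b'
    have hstep1 : applyAt N 1 (t :: s₁ :: rest) = a' :: b' :: rest := by
      simp [applyAt, hab]
    have hsweep : applySeq N (List.range' 1 (s₁ :: rest).length) (t :: s₁ :: rest)
        = a' :: N (b' :: rest) := by
      rw [show (s₁ :: rest).length = rest.length + 1 from rfl, List.range'_succ,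
        applySeq_cons, hstep1, applySeq_shift rest.length 1 le_rfl, ← hM]
    have hMnorm : N (N (b' :: rest)) = N (b' :: rest) := N_idem hN _
    have hW : N (a' :: N (b' :: rest)) = a' :: N (b' :: rest) := by
      rw [hN.normal_iff]
      intro u v x y huv
      cases u with
      | cons hd u' =>
          have h2 : N (b' :: rest) = u' ++ x :: y :: v := by
            injection huv
          exact (hN.normal_iff _).mp hMnorm u' v x y h2
      | nil =>
          cases rest with
          | nil =>
              have hMb : N (b' :: ([] : List A)) = [b'] := hN.letter b'
              rw [hMb, List.nil_append] at huv
              obtain ⟨rfl, rfl, rfl⟩ : a' = x ∧ b' = y ∧ ([] : List A) = v := by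
                simpa using huv
              have h2 := N_idem hN [t, s₁]
              rw [hab] at h2
              exact h2
          | cons s₂ rest' =>
              obtain ⟨c', b'', hb'c⟩ := exists_pair hN b' s₂
              have hstep1' : applyAt N 1 (b' :: s₂ :: rest') = c' :: b'' :: rest' := by
                simp [applyAt, hb'c]
              have hMc : N (b' :: s₂ :: rest')
                  = c' :: applySeq N (List.range' 1 rest'.length) (b'' :: rest') := by
                rw [hM, show (s₂ :: rest').length = rest'.length + 1 from rfl,
                  List.range'_succ, applySeq_cons, hstep1',
                  applySeq_shift rest'.length 1 le_rfl]
              rw [hMc, List.nil_append] at huv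
              injection huv with e1 e2
              injection e2 with e3 e4
              subst e1; subst e3
              exact domino hN h3
                ((hN.normal_iff _).mp hs [] rest' s₁ s₂ rfl) hab hb'c
    calc N (t :: s₁ :: rest)
        = N (applySeq N (List.range' 1 (s₁ :: rest).length) (t :: s₁ :: rest)) :=
          (N_applySeq hN (by
            intro i hi
            rw [List.mem_range'] at hi
            obtain ⟨j, _, rfl⟩ := hi
            omega) _).symm
      _ = N (a' :: N (b' :: rest)) := by rw [hsweep]
      _ = a' :: N (b' :: rest) := hW
      _ = applySeq N (List.range' 1 (s₁ :: rest).length) (t :: s₁ :: rest) := hsweep.symm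

end Main

/-- if `(A, N)` is a quadratic normalisation of class `(4,3)`, then
for every letter `t` and every `N`-normal word `s`, `N (t :: s)` is computed by
the single left-to-right sweep `N̄_q ⋯ N̄_2 N̄_1`; in particular the leftmost letter
of `N (t :: s)` depends only on `t` and the first letter of `s`. -/
theorem class43_letter_times_normal {A : Type*} (N : List A → List A)
    (hN : QuadraticNormalisation N) (h43 : IsClass N 4 3) :
    (∀ (t : A) (s : List A), N s = s →
      N (t :: s) = applySeq N (List.range' 1 s.length) (t :: s)) ∧
    (∀ (t s₁ : A) (rest rest' : List A),
      N (s₁ :: rest) = s₁ :: rest → N (s₁ :: rest') = s₁ :: rest' →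
      (N (t :: s₁ :: rest)).head? = (N (t :: s₁ :: rest')).head?) := by
  have h3 : RightClass N 3 := h43.2
  refine ⟨fun t s hs => sweep_eq hN h3 s hs t, ?_⟩
  intro t s₁ rest rest' h h'
  have key : ∀ r : List A, N (s₁ :: r) = s₁ :: r →
      (N (t :: s₁ :: r)).head? = (N [t, s₁]).head? := by
    intro r hr
    obtain ⟨a', b', hab⟩ := exists_pair hN t s₁
    rw [sweep_eq hN h3 _ hr t, show (s₁ :: r).length = r.length + 1 from rfl,
      List.range'_succ, applySeq_cons,
      show applyAt N 1 (t :: s₁ :: r) = a' :: b' :: r from by simp [applyAt, hab],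
      applySeq_shift r.length 1 le_rfl, hab]
    rfl
  rw [key rest h, key rest' h']
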